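/- Let N be prime, d ≥ 1, and let a, b ∈ (1/N)·(Z/NZ)^d with a^{(i)} ≠ b^{(i)} for every coordinate i. Then there exists exactly one rank-1 lattice shifted by an element of (1/N)·(Z/NZ)^d (i.e., exactly one set of the form (L + s) mod 1 with L a rank-1 lattice generated by some g ∈ ((1/N)({1,...,N-1}))^d) that contains both a and b. -/
import Mathlib


/-- Let `N` be prime, `d ≥ 1`, and let `a, b` be grid points (elements of `(1/N)·(ℤ/Nℤ)^d`,
encoded as `(ZMod N)^d`) with `a^{(i)} ≠ b^{(i)}` for every coordinate `i`. Then there exists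
exactly one shifted rank-1 lattice, i.e. exactly one set of the form `L + s` with
`L = {k·g : k ∈ ℤ/Nℤ}` for a generating vector `g` with all coordinates nonzero,
that contains both `a` and `b`. -/
theorem unique_shifted_lattice_through_two_points (N d : ℕ) [Fact N.Prime] (hd : 1 ≤ d)
    (a b : Fin d → ZMod N) (hab : ∀ i, a i ≠ b i) :
    ∃! X : Set (Fin d → ZMod N),
      (∃ (g s : Fin d → ZMod N), (∀ i, g i ≠ 0) ∧
        X = {x | ∃ k : ZMod N, x = k • g + s}) ∧ a ∈ X ∧ b ∈ X := by
  refine ⟨{x | ∃ k : ZMod N, x = k • (a - b) + b},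
    ⟨⟨a - b, b, fun i => sub_ne_zero.2 (hab i), rfl⟩, ⟨1, by simp⟩, ⟨0, by simp⟩⟩, ?_⟩
  rintro X ⟨⟨g, s, hg, rfl⟩, ⟨k₁, ha⟩, ⟨k₂, hb⟩⟩
  have hc : k₁ - k₂ ≠ 0 := by
    intro h
    have : k₁ = k₂ := by linear_combination h
    exact hab ⟨0, hd⟩ (by rw [ha, hb, this])
  have hcg : a - b = (k₁ - k₂) • g := by
    rw [ha, hb]; ext i; simp [sub_smul]; ring
  ext x
  constructor
  · rintro ⟨k, rfl⟩
    refine ⟨(k - k₂) * (k₁ - k₂)⁻¹, ?_⟩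
    rw [hcg, hb]; ext i
    simp only [Pi.add_apply, Pi.smul_apply, smul_eq_mul]
    field_simp
    ring
  · rintro ⟨k, rfl⟩
    refine ⟨k * (k₁ - k₂) + k₂, ?_⟩
    rw [hcg, hb]; ext i
    simp only [Pi.add_apply, Pi.smul_apply, smul_eq_mul]
    ring
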